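/- arXiv:1908.05123 — 3 statements merged into one kernel-verified Lean document; each statement's English description precedes it below -/
import Mathlib

section
/- For every odd positive integer p, the identity (1/4 − p/2)_{(p−1)/2} · (3/4 − p/2)_{(p−1)/2} = (8/8^p) · (2p−1)!/(p−1)! holds in the rational numbers. -/
/-- The rising factorial (Pochhammer symbol) `(x)_n = x(x+1)⋯(x+n-1)` for a rational `x`. -/
noncomputable def risingFactorial (x : ℚ) (n : ℕ) : ℚ := (ascPochhammer ℚ n).eval x

lemma risingFactorial_succ_left (x : ℚ) (n : ℕ) :
    risingFactorial x (n + 1) = x * risingFactorial (x + 1) n := by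
  simp [risingFactorial, ascPochhammer_succ_left, Polynomial.eval_comp]

lemma aux (k : ℕ) :
    risingFactorial (1/4 - (2*k+1 : ℚ)/2) k * risingFactorial (3/4 - (2*k+1 : ℚ)/2) k =
      (8 / (8 : ℚ) ^ (2*k+1)) * (Nat.factorial (4*k+1) : ℚ) / (Nat.factorial (2*k) : ℚ) := by
  induction k with
  | zero => simp [risingFactorial]
  | succ k ih =>
      have e1 : (1/4 - (2*(k+1 : ℕ)+1 : ℚ)/2) + 1 = 1/4 - (2*k+1 : ℚ)/2 := by push_cast; ring
      have e2 : (3/4 - (2*(k+1 : ℕ)+1 : ℚ)/2) + 1 = 3/4 - (2*k+1 : ℚ)/2 := by push_cast; ring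
      rw [risingFactorial_succ_left, risingFactorial_succ_left, e1, e2]
      have hf1 : (4*(k+1)+1) = (4*k+1) + 4 := by ring
      have hf2 : (2*(k+1)) = (2*k) + 2 := by ring
      rw [hf1, hf2]
      have h4 : Nat.factorial ((4*k+1)+4)
          = ((4*k+5) * ((4*k+4) * ((4*k+3) * ((4*k+2))))) * Nat.factorial (4*k+1) := by
        simp [Nat.factorial_succ]; ring
      have h2 : Nat.factorial ((2*k)+2) = ((2*k+2) * (2*k+1)) * Nat.factorial (2*k) := by
        simp [Nat.factorial_succ]; ring
      rw [h4, h2]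
      have hne1 : (Nat.factorial (2*k) : ℚ) ≠ 0 := by
        exact_mod_cast Nat.factorial_ne_zero _
      have h8 : (8 : ℚ) ^ (2*(k+1)+1) = 64 * 8 ^ (2*k+1) := by ring
      have h8ne : (8 : ℚ) ^ (2*k+1) ≠ 0 := by positivity
      have key := ih
      push_cast at *
      field_simp at key ⊢
      linear_combination ((2 - 4*(2*(k:ℚ)+3)) * (6 - 4*(2*(k:ℚ)+3)) * 64 * (2*(k:ℚ)+2) * (2*(k:ℚ)+1)) * key - ((3840 + 23552*(k:ℚ) + 52224*(k:ℚ)^2 + 49152*(k:ℚ)^3 + 16384*(k:ℚ)^4)) * key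

theorem stmt_1 (p : ℕ) (hodd : Odd p) (hpos : 0 < p) :
    risingFactorial (1/4 - (p : ℚ)/2) ((p - 1)/2) *
      risingFactorial (3/4 - (p : ℚ)/2) ((p - 1)/2) =
      (8 / (8 : ℚ) ^ p) * (Nat.factorial (2*p - 1) : ℚ) / (Nat.factorial (p - 1) : ℚ) := by
  obtain ⟨k, hk⟩ := hodd
  subst hk
  have h1 : (2*k + 1 - 1)/2 = k := by omega
  have h2 : 2*(2*k+1) - 1 = 4*k+1 := by omega
  have h3 : 2*k + 1 - 1 = 2*k := by omega
  rw [h1, h2, h3]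
  have := aux k
  push_cast at this ⊢
  convert this using 4
end

section
/- For every odd positive integer p, the terminating hypergeometric identity ∑_{n=0}^{(p−1)/2} [ (1/2 − p/2)_n^3 / (1 − p/2)_n^3 ] · (5 + 42(n − p/2)) · (1/64)^n = −(128p^3/(p+1)^3) · ∑_{n=0}^{(p−1)/2} [ (1/2 − p/2)_n^3 / (3/2 + p/2)_n^3 ] · (−1)^n · (2n+1) holds in the rational numbers. -/
lemma rf_zero (x : ℚ) : risingFactorial x 0 = 1 := by simp [risingFactorial]

lemma rf_succ (x : ℚ) (n : ℕ) : risingFactorial x (n+1) = risingFactorial x n * (x + n) := by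
  simp [risingFactorial, ascPochhammer_succ_eval]

lemma rf_succ_left (x : ℚ) (n : ℕ) :
    risingFactorial x (n+1) = x * risingFactorial (x+1) n := by
  simp [risingFactorial, ascPochhammer_succ_left, Polynomial.eval_comp]

lemma rf_shift (x : ℚ) (n : ℕ) :
    risingFactorial x n * (x + n) = x * risingFactorial (x+1) n := by
  rw [← rf_succ, rf_succ_left]

lemma rf_prod (x : ℚ) (n : ℕ) : risingFactorial x n = ∏ i ∈ Finset.range n, (x + i) := by
  induction n with
  | zero => simp [rf_zero]
  | succ k ih => rw [rf_succ, ih, Finset.prod_range_succ]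

lemma rf_pos (x : ℚ) (hx : 0 < x) (n : ℕ) : 0 < risingFactorial x n := by
  rw [rf_prod]; exact Finset.prod_pos (fun i _ => by positivity)

lemma rf_nat_ne (m n : ℕ) : risingFactorial ((m:ℚ)+2) n ≠ 0 :=
  ne_of_gt (rf_pos _ (by positivity) n)

lemma rf_half_ne (m n : ℕ) : risingFactorial ((1:ℚ)/2 - m) n ≠ 0 := by
  rw [rf_prod]
  refine Finset.prod_ne_zero_iff.mpr (fun i _ => ?_)
  intro h
  have h2 : (2*(i:ℚ) + 1) = 2*(m:ℚ) := by linarith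
  have h3 : (2*i+1 : ℕ) = 2*m := by exact_mod_cast h2
  omega

lemma rf_neg_zero (m n : ℕ) (h : m < n) : risingFactorial (-(m:ℚ)) n = 0 := by
  rw [rf_prod]
  exact Finset.prod_eq_zero (Finset.mem_range.mpr h) (by simp)

noncomputable def tt1 (q : ℚ) (n : ℕ) : ℚ :=
  risingFactorial (-q) n ^ 3 / risingFactorial (1/2 - q) n ^ 3 *
    (5 + 42 * ((n:ℚ) - (2*q+1)/2)) * (1/64 : ℚ) ^ n

noncomputable def tt2 (q : ℚ) (n : ℕ) : ℚ :=
  risingFactorial (-q) n ^ 3 / risingFactorial (q+2) n ^ 3 * (-1 : ℚ) ^ n * (2*(n:ℚ)+1)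

noncomputable def GG (q : ℚ) (n : ℕ) : ℚ :=
  -(q+2)^3 * ((n:ℚ)^4 - 6*(q+1)^2*(n:ℚ)^2 + 21*q^4+92*q^3+150*q^2+108*q+29) * (-1:ℚ)^n *
    (risingFactorial (-q-1) n)^3 / (8*(2*q+3)^3 * (q+1)^3 * (risingFactorial (q+2) n)^3)

-- (A): shift identity for tt1
lemma hA (m n : ℕ) :
    tt1 ((m:ℚ)+1) (n+1) = (2*(m:ℚ)+2)^3/(64*(2*(m:ℚ)+1)^3) * tt1 (m:ℚ) n := by
  unfold tt1
  rw [show -((m:ℚ)+1) = (-(m:ℚ)-1) from by ring, rf_succ_left (-(m:ℚ)-1) n,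
      show (-(m:ℚ)-1+1) = -(m:ℚ) from by ring,
      show (1/2 - ((m:ℚ)+1)) = (-1/2-(m:ℚ)) from by ring, rf_succ_left (-1/2-(m:ℚ)) n,
      show (-1/2-(m:ℚ)+1) = 1/2-(m:ℚ) from by ring]
  set A := risingFactorial (-(m:ℚ)) n with hA_def
  set B := risingFactorial (1/2-(m:ℚ)) n with hB_def
  have hB := rf_half_ne m n
  rw [← hB_def] at hB
  have h1 : (2*(m:ℚ)+1) ≠ 0 := by positivity
  have hs : ((-1/2-(m:ℚ))*B)^3 = -(((1/2+(m:ℚ))*B)^3) := by ring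
  rw [hs, div_neg]
  have h2 : ((1/2+(m:ℚ))*B)^3 ≠ 0 := by
    apply pow_ne_zero; apply mul_ne_zero _ hB; positivity
  push_cast
  field_simp
  ring

lemma hA0 (m : ℕ) : tt1 ((m:ℚ)+1) 0 = -(42*(m:ℚ)+58) := by
  simp [tt1, rf_zero]; ring

lemma hB4 (m : ℕ) : tt2 (m:ℚ) (m+1) = 0 := by
  unfold tt2
  rw [rf_neg_zero m (m+1) (by omega)]
  simp

lemma hB3 (m : ℕ) : GG (m:ℚ) (m+2) = 0 := by
  unfold GG
  rw [show (-(m:ℚ)-1) = -(((m+1:ℕ)):ℚ) from by push_cast; ring,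
      rf_neg_zero (m+1) (m+2) (by omega)]
  simp

lemma hB2 (m : ℕ) : GG (m:ℚ) 0 = -((m:ℚ)+2)^3*(21*(m:ℚ)+29)/(8*(2*(m:ℚ)+3)^3) := by
  unfold GG
  rw [rf_zero, rf_zero]
  have h1 : ((m:ℚ)+1) ≠ 0 := by positivity
  have h2 : (2*(m:ℚ)+3) ≠ 0 := by positivity
  push_cast
  field_simp
  ring

lemma hB1 (m n : ℕ) :
    GG (m:ℚ) (n+1) - GG (m:ℚ) n
      = tt2 ((m:ℚ)+1) n - (2*(m:ℚ)+4)^3/(64*(2*(m:ℚ)+3)^3) * tt2 (m:ℚ) n := by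
  unfold GG tt2
  rw [rf_succ (-(m:ℚ)-1) n, rf_succ ((m:ℚ)+2) n,
      show -((m:ℚ)+1) = (-(m:ℚ)-1) from by ring,
      show ((m:ℚ)+1+2) = ((m:ℚ)+2)+1 from by ring]
  set A1 := risingFactorial (-(m:ℚ)-1) n with hA1d
  set A0 := risingFactorial (-(m:ℚ)) n with hA0d
  set C0 := risingFactorial ((m:ℚ)+2) n with hC0d
  set C1 := risingFactorial ((m:ℚ)+2+1) n with hC1d
  have hshA : A1 * ((-(m:ℚ)-1) + n) = (-(m:ℚ)-1) * A0 := by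
    rw [hA1d, hA0d, rf_shift, show (-(m:ℚ)-1+1) = -(m:ℚ) from by ring]
  have hshC : C0 * (((m:ℚ)+2) + n) = ((m:ℚ)+2) * C1 := by
    rw [hC0d, hC1d, rf_shift]
  have hm1 : ((m:ℚ)+1) ≠ 0 := by positivity
  have hm2 : ((m:ℚ)+2) ≠ 0 := by positivity
  have hm3 : (2*(m:ℚ)+3) ≠ 0 := by positivity
  have hmn : ((m:ℚ)+2+(n:ℚ)) ≠ 0 := by positivity
  have hC0 : C0 ≠ 0 := rf_nat_ne m n
  have eA : A0^3 = -(A1^3 * (((n:ℚ)-(m:ℚ)-1)^3) / (((m:ℚ)+1)^3)) := by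
    have h3 : (A1 * ((-(m:ℚ)-1) + n))^3 = ((-(m:ℚ)-1) * A0)^3 := by rw [hshA]
    field_simp
    linear_combination h3
  have eC : C1^3 = C0^3 * (((m:ℚ)+2+(n:ℚ))^3) / (((m:ℚ)+2)^3) := by
    have h3 : (C0 * (((m:ℚ)+2) + n))^3 = (((m:ℚ)+2) * C1)^3 := by rw [hshC]
    field_simp
    linear_combination -h3
  rw [eA, eC]
  push_cast
  field_simp
  ring

lemma master (m : ℕ) :
    ∑ n ∈ Finset.range (m+1), tt1 (m:ℚ) n
      = -(128*(2*(m:ℚ)+1)^3/(2*(m:ℚ)+2)^3) * ∑ n ∈ Finset.range (m+1), tt2 (m:ℚ) n := by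
  induction m with
  | zero =>
    simp [tt1, tt2, rf_zero]
    norm_num
  | succ m ih =>
    have hcast : ((m+1 : ℕ):ℚ) = (m:ℚ)+1 := by push_cast; ring
    simp only [hcast]
    have hS1 : ∑ n ∈ Finset.range (m+1+1), tt1 ((m:ℚ)+1) n
        = -(42*(m:ℚ)+58) + (2*(m:ℚ)+2)^3/(64*(2*(m:ℚ)+1)^3)
            * ∑ n ∈ Finset.range (m+1), tt1 (m:ℚ) n := by
      rw [Finset.sum_range_succ']
      rw [hA0 m]
      rw [Finset.sum_congr rfl (fun i _ => hA m i), ← Finset.mul_sum]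
      ring
    have hS2 : ∑ n ∈ Finset.range (m+1+1), tt2 ((m:ℚ)+1) n
        = (2*(m:ℚ)+4)^3/(64*(2*(m:ℚ)+3)^3) * ∑ n ∈ Finset.range (m+1), tt2 (m:ℚ) n
          + ((m:ℚ)+2)^3*(21*(m:ℚ)+29)/(8*(2*(m:ℚ)+3)^3) := by
      have htel : ∑ n ∈ Finset.range (m+2), (GG (m:ℚ) (n+1) - GG (m:ℚ) n)
          = GG (m:ℚ) (m+2) - GG (m:ℚ) 0 := Finset.sum_range_sub (GG (m:ℚ)) (m+2)
      have hexp : ∀ n ∈ Finset.range (m+2), tt2 ((m:ℚ)+1) n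
          = (GG (m:ℚ) (n+1) - GG (m:ℚ) n)
            + (2*(m:ℚ)+4)^3/(64*(2*(m:ℚ)+3)^3) * tt2 (m:ℚ) n :=
        fun n _ => by linear_combination (-1 : ℚ) * hB1 m n
      rw [show m+1+1 = m+2 from rfl, Finset.sum_congr rfl hexp, Finset.sum_add_distrib,
          htel, hB3, hB2, ← Finset.mul_sum,
          Finset.sum_range_succ (tt2 (m:ℚ)) (m+1), hB4, add_zero]
      ring
    rw [hS1, hS2, ih]
    have h1 : (2*(m:ℚ)+1) ≠ 0 := by positivity
    have h2 : (2*(m:ℚ)+2) ≠ 0 := by positivity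
    have h3 : (2*(m:ℚ)+3) ≠ 0 := by positivity
    have h4 : (2*(m:ℚ)+4) ≠ 0 := by positivity
    field_simp
    ring

theorem stmt_9 (p : ℕ) (hodd : Odd p) (hpos : 0 < p) :
    ∑ n ∈ Finset.range ((p - 1)/2 + 1),
        (risingFactorial (1/2 - (p : ℚ)/2) n) ^ 3 / (risingFactorial (1 - (p : ℚ)/2) n) ^ 3 *
          (5 + 42 * ((n : ℚ) - (p : ℚ)/2)) * (1/64 : ℚ) ^ n =
      -(128 * (p : ℚ) ^ 3 / ((p : ℚ) + 1) ^ 3) *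
        ∑ n ∈ Finset.range ((p - 1)/2 + 1),
          (risingFactorial (1/2 - (p : ℚ)/2) n) ^ 3 /
            (risingFactorial (3/2 + (p : ℚ)/2) n) ^ 3 * (-1 : ℚ) ^ n * (2 * (n : ℚ) + 1) := by
  obtain ⟨m, hm⟩ : ∃ m, p = 2*m+1 := ⟨p/2, by have := Nat.odd_iff.mp hodd; omega⟩
  subst hm
  have hdiv : (2*m+1-1)/2 = m := by omega
  rw [hdiv]
  have hc : ((2*m+1 : ℕ) : ℚ) = 2*(m:ℚ)+1 := by push_cast; ring
  rw [hc]
  have e1 : (1:ℚ)/2 - (2*(m:ℚ)+1)/2 = -(m:ℚ) := by ring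
  have e2 : (1:ℚ) - (2*(m:ℚ)+1)/2 = 1/2 - (m:ℚ) := by ring
  have e3 : (3:ℚ)/2 + (2*(m:ℚ)+1)/2 = (m:ℚ)+2 := by ring
  simp only [e1, e2, e3]
  have h := master m
  simp only [tt1, tt2] at h
  rw [show (2*(m:ℚ)+2) = 2*(m:ℚ)+1+1 from by ring] at h
  exact h
end

section
/- For every prime p ≥ 5, the integer congruence p · ((3p−3)/2)! / ( ((p−1)/2)! )^3 ≡ (−1)^{(p−1)/2} · (3p−2) · (3p−3)! / ( (p−1)! )^3 (mod p^5) holds, where both trinomial coefficients ((3p−3)/2)! / (((p−1)/2)!)^3 and (3p−3)! / ((p−1)!)^3 are integers. -/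
open Finset Nat

namespace Stmt19

/-- Expansion of a product with a square-zero element. -/
lemma prod_add_nilpotent {R : Type*} [CommRing R] (q : R) (hq : q * q = 0)
    (c b : ℕ → R) (s : Finset ℕ) :
    ∏ j ∈ s, (c j + q * b j) =
      (∏ j ∈ s, c j) + q * ∑ k ∈ s, b k * ∏ j ∈ s.erase k, c j := by
  induction s using Finset.induction with
  | empty => simp
  | insert a s ha ih =>
    rw [Finset.prod_insert ha, Finset.prod_insert ha, Finset.sum_insert ha, ih,
      Finset.erase_insert ha]
    have h2 : ∀ k ∈ s, b k * ∏ j ∈ (insert a s).erase k, c j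
        = c a * (b k * ∏ j ∈ s.erase k, c j) := by
      intro k hk
      rw [Finset.erase_insert_of_ne (by rintro rfl; exact ha hk),
        Finset.prod_insert (fun h => ha (Finset.mem_of_mem_erase h))]
      ring
    rw [Finset.sum_congr rfl h2, ← Finset.mul_sum]
    linear_combination (b a * ∑ k ∈ s, b k * ∏ j ∈ s.erase k, c j) * hq

lemma prod_range_two_mul {M : Type*} [CommMonoid M] (n : ℕ) (f : ℕ → M) :
    ∏ j ∈ range (2*n), f j = ∏ j ∈ range n, (f j * f (2*n - 1 - j)) := by
  rw [two_mul, Finset.prod_range_add, ← Finset.prod_range_reflect (fun j => f (n + j)) n,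
    ← Finset.prod_mul_distrib]
  refine Finset.prod_congr rfl fun j hj => ?_
  rw [Finset.mem_range] at hj
  congr 2
  omega

lemma sum_range_two_mul {M : Type*} [AddCommMonoid M] (n : ℕ) (f : ℕ → M) :
    ∑ j ∈ range (2*n), f j = ∑ j ∈ range n, (f j + f (2*n - 1 - j)) := by
  rw [two_mul, Finset.sum_range_add, ← Finset.sum_range_reflect (fun j => f (n + j)) n,
    ← Finset.sum_add_distrib]
  refine Finset.sum_congr rfl fun j hj => ?_
  rw [Finset.mem_range] at hj
  congr 2
  omega

lemma factorial_add_eq (a m : ℕ) : (a + m)! = a ! * ∏ j ∈ range m, (a + j + 1) := by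
  induction m with
  | zero => simp
  | succ m ih =>
    rw [Finset.prod_range_succ, ← mul_assoc, ← ih, ← Nat.add_assoc, Nat.factorial_succ]
    ring


lemma sum_univ_sq_inv (p : ℕ) [Fact p.Prime] (hge : 5 ≤ p) :
    ∑ x : ZMod p, (x⁻¹)^2 = 0 := by
  have h1 : ∑ x : ZMod p, (x⁻¹)^2 = ∑ x : ZMod p, x^2 := by
    refine (Fintype.sum_bijective (fun x : ZMod p => x⁻¹)
      (inv_involutive.bijective) _ _ fun x => ?_).symm
    rw [inv_inv]
  rw [h1]
  have := FiniteField.sum_pow_lt_card_sub_one (K := ZMod p) 2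
    (by rw [ZMod.card]; omega)
  exact this

lemma sum_univ_eq_sum_range {M : Type*} [AddCommMonoid M] (p : ℕ) [NeZero p]
    (f : ZMod p → M) : ∑ x : ZMod p, f x = ∑ k ∈ range p, f (k : ℕ) := by
  refine (Finset.sum_nbij' (fun k => ((k : ℕ) : ZMod p)) (fun x => x.val) ?_ ?_ ?_ ?_ ?_).symm
  · intro a ha; exact Finset.mem_univ _
  · intro x hx; exact Finset.mem_range.mpr (ZMod.val_lt x)
  · intro a ha; exact ZMod.val_cast_of_lt (Finset.mem_range.mp ha)
  · intro x hx; exact ZMod.natCast_rightInverse x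
  · intro a ha; rfl

lemma half_inv_sq_sum (p : ℕ) [Fact p.Prime] (hge : 5 ≤ p) (n : ℕ) (hn : p = 2*n+1) :
    ∑ j ∈ range n, ((((j+1 : ℕ)) : ZMod p)⁻¹)^2 = 0 := by
  have h0 : (0 : ZMod p) = ((0:ℕ) : ZMod p) := by norm_num
  have hsum : (0 : ZMod p) = ∑ k ∈ range p, (((k:ℕ) : ZMod p)⁻¹)^2 := by
    rw [← sum_univ_eq_sum_range p (fun x => (x⁻¹)^2), sum_univ_sq_inv p hge]
  have hsum2 : (0 : ZMod p) = ∑ k ∈ range (2*n+1), (((k:ℕ) : ZMod p)⁻¹)^2 := by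
    rw [← hn]; exact hsum
  clear hsum
  rename' hsum2 => hsum
  rw [Finset.sum_range_succ' (fun k => (((k:ℕ) : ZMod p)⁻¹)^2) (2*n)] at hsum
  simp only [Nat.cast_zero, inv_zero, ne_eq, OfNat.ofNat_ne_zero, not_false_eq_true,
    zero_pow, add_zero] at hsum
  rw [sum_range_two_mul n (fun k => (((k+1:ℕ) : ZMod p)⁻¹)^2)] at hsum
  have href : ∀ j ∈ range n, (((j+1:ℕ) : ZMod p)⁻¹)^2 + (((2*n-1-j+1:ℕ) : ZMod p)⁻¹)^2
      = 2 * (((j+1:ℕ) : ZMod p)⁻¹)^2 := by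
    intro j hj
    rw [Finset.mem_range] at hj
    have h2 : (2*n-1-j+1 : ℕ) = p - (j+1) := by omega
    have h3 : ((p - (j+1) : ℕ) : ZMod p) = -((j+1 : ℕ) : ZMod p) := by
      have : (j+1) ≤ p := by omega
      push_cast [Nat.cast_sub this]
      simp
    rw [h2, h3, inv_neg, neg_sq]
    ring
  rw [Finset.sum_congr rfl href, ← Finset.mul_sum] at hsum
  have h2ne : (2 : ZMod p) ≠ 0 := by
    intro h
    have h2 : ((2:ℕ) : ZMod p) = 0 := by exact_mod_cast h
    rw [ZMod.natCast_eq_zero_iff] at h2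
    have := Nat.le_of_dvd (by norm_num) h2
    omega
  rcases mul_eq_zero.mp hsum.symm with h | h
  · exact absurd h h2ne
  · exact h

lemma corr_sum_zero (p : ℕ) [Fact p.Prime] (hge : 5 ≤ p) (n : ℕ) (hn : p = 2*n+1) (m : ℕ) :
    ∑ k ∈ range n, ((k+1:ℕ) : ZMod p)^m * ∏ j ∈ (range n).erase k, ((j+1:ℕ) : ZMod p)^(m+2)
      = 0 := by
  have hne : ∀ k ∈ range n, ((k+1:ℕ) : ZMod p) ≠ 0 := by
    intro k hk
    rw [Finset.mem_range] at hk
    intro h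
    rw [ZMod.natCast_eq_zero_iff] at h
    have := Nat.le_of_dvd (by omega) h
    omega
  have hterm : ∀ k ∈ range n, ((k+1:ℕ) : ZMod p)^m * ∏ j ∈ (range n).erase k, ((j+1:ℕ) : ZMod p)^(m+2)
      = (∏ j ∈ range n, ((j+1:ℕ) : ZMod p)^(m+2)) * ((((k+1:ℕ)) : ZMod p)⁻¹)^2 := by
    intro k hk
    rw [← Finset.mul_prod_erase _ _ hk]
    have hk0 := hne k hk
    have hkey : ((k+1:ℕ) : ZMod p)^(m+2) * ((((k+1:ℕ)) : ZMod p)⁻¹)^2 = ((k+1:ℕ) : ZMod p)^m := by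
      rw [pow_add, mul_assoc, ← mul_pow, mul_inv_cancel₀ hk0, one_pow, mul_one]
    rw [mul_right_comm, hkey]
  rw [Finset.sum_congr rfl hterm, ← Finset.mul_sum, half_inv_sq_sum p hge n hn, mul_zero]

lemma p_sq_mul_eq_zero {p : ℕ} [Fact p.Prime] (x : ZMod (p^3))
    (h : ZMod.castHom (dvd_pow_self p (three_ne_zero)) (ZMod p) x = 0) :
    (p : ZMod (p^3))^2 * x = 0 := by
  have hp : 0 < p := (Fact.out : p.Prime).pos
  haveI : NeZero (p^3) := ⟨pow_ne_zero _ hp.ne'⟩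
  have hx : ((x.val : ℕ) : ZMod (p^3)) = x := ZMod.natCast_rightInverse x
  rw [ZMod.castHom_apply, ← ZMod.natCast_val, ZMod.natCast_eq_zero_iff] at h
  obtain ⟨t, ht⟩ := h
  rw [← hx, ht]
  push_cast
  have hp3 : ((p:ZMod (p^3))^3) = 0 := by
    have : (((p^3 : ℕ)) : ZMod (p^3)) = 0 := ZMod.natCast_self _
    push_cast at this
    exact this
  calc (p : ZMod (p^3))^2 * ((p:ZMod (p^3)) * (t:ZMod (p^3)))
      = (p:ZMod (p^3))^3 * t := by ring
    _ = 0 := by rw [hp3, zero_mul]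

section Core
variable (p n : ℕ) [Fact p.Prime]

lemma hP3 : ((p : ZMod (p^3)))^3 = 0 := by
  have : (((p^3 : ℕ)) : ZMod (p^3)) = 0 := ZMod.natCast_self _
  push_cast at this
  exact this

lemma hpair (hge : 5 ≤ p) (hn : p = 2*n+1) :
    (p-1)! = ∏ j ∈ range n, ((j+1) * (p - (j+1))) := by
  rw [← prod_range_add_one_eq_factorial (p-1), show p - 1 = 2*n by omega,
    prod_range_two_mul]
  refine Finset.prod_congr rfl fun j hj => ?_
  rw [Finset.mem_range] at hj
  congr 1
  omega

lemma hDcast (hge : 5 ≤ p) (hn : p = 2*n+1) :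
    (((p-1)! : ℕ) : ZMod (p^3)) =
      ∏ j ∈ range n, (((j+1:ℕ) : ZMod (p^3)) * ((p : ZMod (p^3)) - ((j+1:ℕ) : ZMod (p^3)))) := by
  rw [hpair p n hge hn]
  push_cast
  refine Finset.prod_congr rfl fun j hj => ?_
  rw [Finset.mem_range] at hj
  have hj1 : (j+1) ≤ p := by omega
  rw [Nat.cast_sub hj1]
  push_cast
  ring

lemma idA (hge : 5 ≤ p) (hn : p = 2*n+1) :
    (((p-1)! : ℕ) : ZMod (p^3)) * ∏ j ∈ range n, ((p : ZMod (p^3)) + ((j+1:ℕ) : ZMod (p^3)))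
      = (-1)^n * ((n ! : ℕ) : ZMod (p^3))^3 := by
  set R := ZMod (p^3)
  set P : R := (p : R) with hP
  have h3 : P^3 = 0 := hP3 p
  set a : ℕ → R := fun j => ((j+1:ℕ) : R) with ha
  have hDV : (((p-1)! : ℕ) : R) * ∏ j ∈ range n, (P + a j)
      = ∏ j ∈ range n, (a j * (P - a j) * (P + a j)) := by
    rw [hDcast p n hge hn, ← Finset.prod_mul_distrib]
  rw [hDV]
  have hneg : ∏ j ∈ range n, (a j * (P - a j) * (P + a j))
      = (-1)^n * ∏ j ∈ range n, (a j ^ 3 + P^2 * (-(a j))) := by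
    have : ∀ j ∈ range n, a j * (P - a j) * (P + a j) = (-1) * (a j ^ 3 + P^2 * (-(a j))) := by
      intro j _; ring
    rw [Finset.prod_congr rfl this, Finset.prod_mul_distrib, Finset.prod_const,
      Finset.card_range]
  rw [hneg]
  rw [prod_add_nilpotent (P^2) (by rw [← pow_add] at *; rw [show (2+2) = 3+1 by rfl, pow_succ, h3, zero_mul]) _ _ (range n)]
  have hN : ∏ j ∈ range n, a j ^ 3 = ((n ! : ℕ) : R)^3 := by
    rw [Finset.prod_pow]
    congr 1
    rw [← prod_range_add_one_eq_factorial n]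
    push_cast
    rw [show ((∏ i ∈ range n, (i+1) : ℕ) : R) = ∏ i ∈ range n, ((i+1 : ℕ) : R) from
      (Nat.cast_prod (R := ZMod (p^3)) _ _)]
  have hcorr : (P^2) * ∑ k ∈ range n, (-(a k)) * ∏ j ∈ (range n).erase k, a j ^ 3 = 0 := by
    apply p_sq_mul_eq_zero
    rw [map_sum]
    have : ∀ k ∈ range n,
        (ZMod.castHom (dvd_pow_self p three_ne_zero) (ZMod p))
          ((-(a k)) * ∏ j ∈ (range n).erase k, a j ^ 3)
        = -(((k+1:ℕ) : ZMod p)^1 * ∏ j ∈ (range n).erase k, ((j+1:ℕ) : ZMod p)^(1+2)) := by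
      intro k hk
      rw [map_mul, map_neg, map_prod]
      simp only [ha, map_natCast, map_pow]
      ring
    rw [Finset.sum_congr rfl this, Finset.sum_neg_distrib,
      corr_sum_zero p hge n hn 1, neg_zero]
  rw [hN, hcorr, add_zero]

end Core

section Core2
variable (p n : ℕ) [Fact p.Prime]

lemma idB (hge : 5 ≤ p) (hn : p = 2*n+1) :
    ∏ j ∈ range (2*n), (((p : ZMod (p^3)) + ((j+1:ℕ) : ZMod (p^3)))
        * (2 * (p : ZMod (p^3)) + ((j+1:ℕ) : ZMod (p^3))))
      = (((p-1)! : ℕ) : ZMod (p^3))^2 := by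
  set R := ZMod (p^3)
  set P : R := (p : R) with hPdef
  have h3 : P^3 = 0 := hP3 p
  set a : ℕ → R := fun j => ((j+1:ℕ) : R) with ha
  rw [prod_range_two_mul]
  have hterm : ∀ j ∈ range n,
      ((P + a j) * (2*P + a j)) * ((P + a (2*n-1-j)) * (2*P + a (2*n-1-j)))
      = (a j * (P - a j))^2 + P^2 * (-8 * (a j)^2) := by
    intro j hj
    rw [Finset.mem_range] at hj
    have hsub : a (2*n-1-j) = P - a j := by
      have h1 : (2*n-1-j) + 1 = p - (j+1) := by omega
      have h2 : (j+1) ≤ p := by omega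
      simp only [ha, h1, Nat.cast_sub h2]
      rfl
    rw [hsub]
    linear_combination (8 * (a j) + 12 * P) * h3
  rw [Finset.prod_congr rfl hterm,
    prod_add_nilpotent (P^2) (by rw [← pow_add, show 2+2 = 3+1 by rfl, pow_succ, h3, zero_mul]) _ _ (range n)]
  have hprodc : ∏ j ∈ range n, (a j * (P - a j))^2 = (((p-1)! : ℕ) : R)^2 := by
    rw [Finset.prod_pow, hDcast p n hge hn]
  have hcorr : (P^2) * ∑ k ∈ range n, (-8 * (a k)^2) * ∏ j ∈ (range n).erase k, (a j * (P - a j))^2 = 0 := by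
    apply p_sq_mul_eq_zero
    rw [map_sum]
    have hphi : ∀ k ∈ range n,
        (ZMod.castHom (dvd_pow_self p three_ne_zero) (ZMod p))
          ((-8 * (a k)^2) * ∏ j ∈ (range n).erase k, (a j * (P - a j))^2)
        = -8 * (((k+1:ℕ) : ZMod p)^2 * ∏ j ∈ (range n).erase k, ((j+1:ℕ) : ZMod p)^(2+2)) := by
      intro k hk
      rw [map_mul, map_prod]
      have hfac : ∀ j ∈ (range n).erase k,
          (ZMod.castHom (dvd_pow_self p three_ne_zero) (ZMod p)) ((a j * (P - a j))^2)
          = ((j+1:ℕ) : ZMod p)^(2+2) := by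
        intro j _
        simp only [ha, hPdef, map_pow, map_mul, map_sub, map_natCast, ZMod.natCast_self]
        ring
      rw [Finset.prod_congr rfl hfac]
      simp only [ha, map_mul, map_pow, map_neg, map_natCast, map_ofNat]
      ring
    rw [Finset.sum_congr rfl hphi, ← Finset.mul_sum, corr_sum_zero p hge n hn 2, mul_zero]
  rw [hprodc, hcorr, add_zero]

end Core2

section Glue
variable (p n : ℕ) [Fact p.Prime]

lemma key_zmod (hge : 5 ≤ p) (hn : p = 2*n+1) :
    (∏ j ∈ range (n-1), ((p : ZMod (p^3)) + ((j+1:ℕ) : ZMod (p^3)))) * (((p-1)! : ℕ) : ZMod (p^3))^3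
      = 2 * (-1)^n * (∏ j ∈ range (p-1), ((p : ZMod (p^3)) + ((j+1:ℕ) : ZMod (p^3))))
        * (∏ j ∈ range (p-2), (2 * (p : ZMod (p^3)) + ((j+1:ℕ) : ZMod (p^3))))
        * ((n ! : ℕ) : ZMod (p^3))^3 := by
  have hp := (Fact.out : p.Prime)
  set R := ZMod (p^3)
  set P : R := (p : R) with hPdef
  have hnn : 2 ≤ n := by omega
  -- units
  have hcop : ∀ m : ℕ, ¬ p ∣ m → IsUnit ((m : ℕ) : R) := by
    intro m hm
    rw [ZMod.isUnit_iff_coprime]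
    exact Nat.Coprime.pow_right 3 (Nat.coprime_comm.mp ((Nat.Prime.coprime_iff_not_dvd hp).mpr hm))
  have hu1 : IsUnit (((p+n : ℕ)) : R) := by
    apply hcop
    intro hdvd
    have h2 : p ∣ n := (Nat.dvd_add_right (dvd_refl p)).mp hdvd
    have := Nat.le_of_dvd (by omega) h2
    omega
  have hu2 : IsUnit (((3*p-1 : ℕ)) : R) := by
    apply hcop
    intro hdvd
    have hd1 : p ∣ 3*p - (3*p-1) := Nat.dvd_sub ⟨3, by ring⟩ hdvd
    have h1 : 3*p - (3*p-1) = 1 := by omega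
    rw [h1] at hd1
    have := Nat.le_of_dvd (by omega) hd1
    omega
  have hcast1 : (((p+n : ℕ)) : R) = P + (n : R) := by push_cast; rfl
  have hcast2 : (((3*p-1 : ℕ)) : R) = 3*P - 1 := by
    rw [Nat.cast_sub (by omega)]
    push_cast
    exact (by simp : ((3*p : ℕ) : ZMod (p^3)) - 1 = 3 * (p : ZMod (p^3)) - 1)
  have hu : IsUnit ((P + (n:R)) * (3*P - 1)) := by
    rw [← hcast1, ← hcast2]; exact hu1.mul hu2
  apply hu.mul_right_cancel
  -- auxiliary identities
  have h1 : (n-1)+1 = n := by omega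
  have hV : ∏ j ∈ range n, (P + ((j+1:ℕ) : R))
      = (∏ j ∈ range (n-1), (P + ((j+1:ℕ) : R))) * (P + ((n:ℕ) : R)) := by
    conv_lhs => rw [← h1]
    rw [Finset.prod_range_succ, h1]
  have h2 : (p-2)+1 = p-1 := by omega
  have hpm1 : ((p-1 : ℕ) : R) = P - 1 := by
    rw [Nat.cast_sub (by omega)]; push_cast; rfl
  have hW3 : ∏ j ∈ range (p-1), (2*P + ((j+1:ℕ) : R))
      = (∏ j ∈ range (p-2), (2*P + ((j+1:ℕ) : R))) * (3*P - 1) := by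
    conv_lhs => rw [← h2]
    rw [Finset.prod_range_succ, h2, hpm1]
    congr 1; ring
  have hp1 : p - 1 = 2*n := by omega
  have hU : (∏ j ∈ range (p-1), (P + ((j+1:ℕ) : R)))
      * (∏ j ∈ range (p-1), (2*P + ((j+1:ℕ) : R))) = (((p-1)! : ℕ) : R)^2 := by
    rw [← Finset.prod_mul_distrib]
    have hB := idB p n hge hn
    rw [← hp1] at hB
    exact hB
  have haV := idA p n hge hn
  have h2n : 2*(P + (n:R)) = 3*P - 1 := by
    have h3 : ((2*n : ℕ) : R) = P - 1 := by
      rw [show 2*n = p-1 by omega, Nat.cast_sub (by omega)]; push_cast; rfl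
    push_cast at h3
    rw [show ((2*n : ℕ) : R) = 2 * (n:R) from
      (by simp : ((2*n : ℕ) : ZMod (p^3)) = 2 * (n : ZMod (p^3)))] at h3
    linear_combination h3
  set W1 := ∏ j ∈ range (n-1), (P + ((j+1:ℕ) : R))
  set W2 := ∏ j ∈ range (p-1), (P + ((j+1:ℕ) : R))
  set W3 := ∏ j ∈ range (p-2), (2*P + ((j+1:ℕ) : R))
  set W3' := ∏ j ∈ range (p-1), (2*P + ((j+1:ℕ) : R))
  set V := ∏ j ∈ range n, (P + ((j+1:ℕ) : R))
  set D := (((p-1)! : ℕ) : R)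
  set N := ((n ! : ℕ) : R)
  set s : R := (-1)^n
  linear_combination (-(D^3*(3*P-1))) * hV + (D^2*(3*P-1)) * haV
    + (s*N^3*(3*P-1)*W2) * hW3 + (-(s*N^3*(3*P-1))) * hU
    + (-(s*W2*W3*N^3*(3*P-1))) * h2n

end Glue

lemma fact_p (p : ℕ) (hp : 1 ≤ p) : p ! = p * (p-1)! := by
  have h := Nat.factorial_succ (p-1)
  rw [show p-1+1 = p by omega] at h
  exact h

lemma fact1 (p n : ℕ) (hge : 5 ≤ p) (hn : p = 2*n+1) :
    (3*n)! = p * (p-1)! * ∏ j ∈ range (n-1), (p+j+1) := by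
  rw [show 3*n = p + (n-1) by omega, factorial_add_eq, fact_p p (by omega)]

lemma fact2 (p : ℕ) (hge : 5 ≤ p) :
    (3*p-2)! = 2*p^2*(p-1)! * (∏ j ∈ range (p-1), (p+j+1)) * (∏ j ∈ range (p-2), (2*p+j+1)) := by
  have h3 : ∏ j ∈ range (p-1), (2*p + j) = (∏ j ∈ range (p-2), (2*p+j+1)) * (2*p) := by
    have h := Finset.prod_range_succ' (fun j => 2*p + j) (p-2)
    rw [show p-2+1 = p-1 by omega] at h
    rw [h, add_zero]
    congr 1
  rw [show 3*p-2 = p + (2*p-2) by omega, factorial_add_eq, fact_p p (by omega),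
    show 2*p-2 = (p-1)+(p-1) by omega, Finset.prod_range_add]
  have h1 : ∀ j ∈ range (p-1), (p + ((p-1) + j) + 1) = 2*p + j := by
    intro j _; omega
  rw [Finset.prod_congr rfl h1, h3]
  ring
end Stmt19


theorem stmt_19 (p : ℕ) (hp : p.Prime) (hge : 5 ≤ p) :
    (Nat.factorial ((p - 1)/2)) ^ 3 ∣ Nat.factorial ((3*p - 3)/2) ∧
    (Nat.factorial (p - 1)) ^ 3 ∣ Nat.factorial (3*p - 3) ∧
    ((p : ℤ) ^ 5 ∣
      (p : ℤ) * ((Nat.factorial ((3*p - 3)/2) / (Nat.factorial ((p - 1)/2)) ^ 3 : ℕ) : ℤ) -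
        (-1 : ℤ) ^ ((p - 1)/2) * (3 * (p : ℤ) - 2) *
          ((Nat.factorial (3*p - 3) / (Nat.factorial (p - 1)) ^ 3 : ℕ) : ℤ)) := by
  haveI : Fact p.Prime := ⟨hp⟩
  have hodd : p % 2 = 1 := (Nat.Prime.eq_two_or_odd hp).resolve_left (by omega)
  obtain ⟨n, hn⟩ : ∃ n, p = 2*n+1 := ⟨(p-1)/2, by omega⟩
  have hnn : 2 ≤ n := by omega
  have hhalf : (p-1)/2 = n := by omega
  have h3h : (3*p-3)/2 = 3*n := by omega
  have h6 : 3*p-3 = 6*n := by omega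
  have h2n : p-1 = 2*n := by omega
  rw [hhalf, h3h, h6, h2n]
  have d1 : (n !)^3 ∣ (3*n)! := by
    have h1 : n ! * n ! ∣ (2*n)! := by
      have := Nat.factorial_mul_factorial_dvd_factorial_add n n
      rwa [← two_mul] at this
    have h2 : (2*n)! * n ! ∣ (3*n)! := by
      have := Nat.factorial_mul_factorial_dvd_factorial_add (2*n) n
      rwa [show 2*n+n = 3*n by ring] at this
    calc (n !)^3 = (n ! * n !) * n ! := by ring
      _ ∣ (2*n)! * n ! := mul_dvd_mul_right h1 _
      _ ∣ (3*n)! := h2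
  have d2 : ((2*n)!)^3 ∣ (6*n)! := by
    have h1 : (2*n)! * (2*n)! ∣ (4*n)! := by
      have := Nat.factorial_mul_factorial_dvd_factorial_add (2*n) (2*n)
      rwa [show 2*n+2*n = 4*n by ring] at this
    have h2 : (4*n)! * (2*n)! ∣ (6*n)! := by
      have := Nat.factorial_mul_factorial_dvd_factorial_add (4*n) (2*n)
      rwa [show 4*n+2*n = 6*n by ring] at this
    calc ((2*n)!)^3 = ((2*n)! * (2*n)!) * (2*n)! := by ring
      _ ∣ (4*n)! * (2*n)! := mul_dvd_mul_right h1 _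
      _ ∣ (6*n)! := h2
  refine ⟨d1, d2, ?_⟩
  -- notation
  have hcopF : ∀ m : ℕ, m < p → Nat.Coprime p (m !) :=
    fun m hm => (Nat.Prime.coprime_iff_not_dvd hp).mpr
      (fun hd => by have := (Nat.Prime.dvd_factorial hp).mp hd; omega)
  have hcop : IsCoprime ((p:ℤ)^5) (((n !)^3 * ((2*n)!)^3 : ℕ) : ℤ) := by
    have hnat : Nat.Coprime (p^5) ((n !)^3 * ((2*n)!)^3) :=
      Nat.Coprime.pow_left _ (Nat.Coprime.mul_right
        (Nat.Coprime.pow_right _ (hcopF n (by omega)))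
        (Nat.Coprime.pow_right _ (hcopF (2*n) (by omega))))
    have hiso := Nat.isCoprime_iff_coprime.mpr hnat
    push_cast at hiso ⊢
    exact hiso
  refine hcop.dvd_of_dvd_mul_right ?_
  -- integer abbreviations
  have e1 : (((3*n)! / (n !)^3 : ℕ) : ℤ) * ((n ! : ℕ) : ℤ)^3 = (((3*n)! : ℕ) : ℤ) := by
    have := Nat.div_mul_cancel d1
    exact_mod_cast congrArg (Nat.cast : ℕ → ℤ) this
  have e2 : (((6*n)! / ((2*n)!)^3 : ℕ) : ℤ) * (((2*n)! : ℕ) : ℤ)^3 = (((6*n)! : ℕ) : ℤ) := by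
    have := Nat.div_mul_cancel d2
    exact_mod_cast congrArg (Nat.cast : ℕ → ℤ) this
  have hDDz : (((2*n)! : ℕ) : ℤ) = (((p-1)! : ℕ) : ℤ) := by rw [h2n]
  have c1 : (((3*n)! : ℕ) : ℤ)
      = (p : ℤ) * ((p-1)! : ℕ) * ((∏ j ∈ range (n-1), (p+j+1) : ℕ) : ℤ) := by
    have := Stmt19.fact1 p n hge hn
    exact_mod_cast congrArg (Nat.cast : ℕ → ℤ) this
  have hf : (3*p-2)! = (3*p-2) * (6*n)! := by
    have h := Nat.factorial_succ (6*n)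
    rw [show 6*n+1 = 3*p-2 by omega] at h
    exact h
  have hc32 : ((3*p-2 : ℕ) : ℤ) = 3*(p:ℤ) - 2 := by
    rw [Nat.cast_sub (by omega)]
    push_cast
    ring
  have c2 : (3*(p:ℤ)-2) * (((6*n)! : ℕ) : ℤ)
      = 2*(p:ℤ)^2*((p-1)! : ℕ) * ((∏ j ∈ range (p-1), (p+j+1) : ℕ) : ℤ)
        * ((∏ j ∈ range (p-2), (2*p+j+1) : ℕ) : ℤ) := by
    have hq := Stmt19.fact2 p hge
    rw [hf] at hq
    have := congrArg (Nat.cast : ℕ → ℤ) hq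
    push_cast at this
    rw [← hc32]
    push_cast
    linear_combination this
  -- the mod p^3 bracket
  have hbr : ((p:ℤ))^3 ∣ (((∏ j ∈ range (n-1), (p+j+1) : ℕ) : ℤ) * (((p-1)! : ℕ) : ℤ)^3
      - 2*(-1)^n * ((∏ j ∈ range (p-1), (p+j+1) : ℕ) : ℤ)
        * ((∏ j ∈ range (p-2), (2*p+j+1) : ℕ) : ℤ) * ((n ! : ℕ) : ℤ)^3) := by
    have hz := (ZMod.intCast_zmod_eq_zero_iff_dvd
      ((((∏ j ∈ range (n-1), (p+j+1) : ℕ) : ℤ) * (((p-1)! : ℕ) : ℤ)^3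
      - 2*(-1)^n * ((∏ j ∈ range (p-1), (p+j+1) : ℕ) : ℤ)
        * ((∏ j ∈ range (p-2), (2*p+j+1) : ℕ) : ℤ) * ((n ! : ℕ) : ℤ)^3)) (p^3)).mp
    have hmod : (((p^3 : ℕ)) : ℤ) = (p:ℤ)^3 := by push_cast; ring
    rw [hmod] at hz
    apply hz
    have hkey := Stmt19.key_zmod p n hge hn
    push_cast at hkey ⊢
    simp only [add_assoc] at hkey ⊢
    linear_combination hkey
  obtain ⟨t, ht⟩ := hbr
  refine ⟨(((p-1)! : ℕ) : ℤ) * t, ?_⟩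
  push_cast at e1 e2 c1 c2 ht ⊢
  linear_combination ((p:ℤ)*(((2*n)! : ℕ) : ℤ)^3) * e1
    - ((-1:ℤ)^n*(3*(p:ℤ)-2)*((n ! : ℕ) : ℤ)^3) * e2
    + ((p:ℤ)*(((3*n)! : ℕ) : ℤ)*((((2*n)! : ℕ) : ℤ)^2 + (((2*n)! : ℕ) : ℤ)*(((p-1)! : ℕ) : ℤ) + (((p-1)! : ℕ) : ℤ)^2)) * hDDz
    + ((p:ℤ)*(((p-1)! : ℕ) : ℤ)^3) * c1
    - ((-1:ℤ)^n*((n ! : ℕ) : ℤ)^3) * c2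
    + ((p:ℤ)^2*(((p-1)! : ℕ) : ℤ)) * ht
end
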